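/- A feedforward neural network with one hidden layer of 2^{n−1} ReLU neurons (with bias terms) and one threshold output neuron can express every Boolean function f : {0,1}^n → {0,1}. -/

import Mathlib

/-- The indicator vector of `x : Fin n → Bool` as a real vector. -/
noncomputable def ind {n : ℕ} (x : Fin n → Bool) : Fin n → ℝ :=
  fun i => if x i then 1 else 0

lemma relu_point {n : ℕ} (y x : Fin n → Bool) :
    max 0 (∑ i, (if y i then (1:ℝ) else -1) * ind x i +
      (1 - ((Finset.univ.filter fun i => y i = true).card : ℝ)))
    = if x = y then 1 else 0 := by
  classical
  have key : ∑ i, (if y i then (1:ℝ) else -1) * ind x i +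
      (1 - ((Finset.univ.filter fun i => y i = true).card : ℝ))
      = 1 - ((Finset.univ.filter fun i => x i ≠ y i).card : ℝ) := by
    have h1 : ((Finset.univ.filter fun i => y i = true).card : ℝ)
        = ∑ i, (if y i = true then (1:ℝ) else 0) := by
      rw [Finset.sum_boole]
    have h2 : ((Finset.univ.filter fun i => x i ≠ y i).card : ℝ)
        = ∑ i, (if x i ≠ y i then (1:ℝ) else 0) := by
      rw [Finset.sum_boole]
    have h3 : ∑ i, ((if y i then (1:ℝ) else -1) * ind x i
        - (if y i = true then (1:ℝ) else 0))
        = ∑ i, -(if x i ≠ y i then (1:ℝ) else 0) := by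
      refine Finset.sum_congr rfl fun i _ => ?_
      cases hx : x i <;> cases hy : y i <;> simp [ind, hx, hy]
    rw [Finset.sum_sub_distrib, Finset.sum_neg_distrib] at h3
    rw [h1, h2]
    linarith
  rw [key]
  by_cases hxy : x = y
  · subst hxy
    have : (Finset.univ.filter fun i => x i ≠ x i) = ∅ := by simp
    simp [this]
  · have hne : ∃ i, x i ≠ y i := by
      by_contra h
      push_neg at h
      exact hxy (funext h)
    obtain ⟨i, hi⟩ := hne
    have hcard : 1 ≤ (Finset.univ.filter fun i => x i ≠ y i).card := by
      refine Finset.card_pos.mpr ⟨i, ?_⟩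
      simp [hi]
    have : (1:ℝ) ≤ ((Finset.univ.filter fun i => x i ≠ y i).card : ℝ) := by
      exact_mod_cast hcard
    simp only [if_neg hxy]
    exact max_eq_left (by linarith)

lemma network_indicator {n : ℕ} (S : Finset (Fin n → Bool)) (hS : S.card ≤ 2 ^ (n - 1)) :
    ∃ (w₁ : Fin (2 ^ (n - 1)) → Fin n → ℝ) (b₁ : Fin (2 ^ (n - 1)) → ℝ)
      (w₂ : Fin (2 ^ (n - 1)) → ℝ),
      ∀ x : Fin n → Bool,
        ∑ j, w₂ j * max 0 (∑ i, w₁ j i * ind x i + b₁ j)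
          = if x ∈ S then (1:ℝ) else 0 := by
  classical
  set p : Fin (2 ^ (n - 1)) → (Fin n → Bool) := fun j =>
    if h : (j : ℕ) < S.card then (S.equivFin.symm ⟨j, h⟩ : _) else fun _ => false with hp
  refine ⟨fun j i => if p j i then 1 else -1,
    fun j => 1 - ((Finset.univ.filter fun i => p j i = true).card : ℝ),
    fun j => if (j : ℕ) < S.card then 1 else 0, fun x => ?_⟩
  have hterm : ∀ j : Fin (2 ^ (n - 1)),
      (if (j : ℕ) < S.card then (1:ℝ) else 0) *
        max 0 (∑ i, (if p j i then (1:ℝ) else -1) * ind x i +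
          (1 - ((Finset.univ.filter fun i => p j i = true).card : ℝ)))
      = if (j : ℕ) < S.card ∧ x = p j then 1 else 0 := by
    intro j
    rw [relu_point]
    by_cases h1 : (j : ℕ) < S.card <;> by_cases h2 : x = p j <;> simp [h1, h2]
  rw [Finset.sum_congr rfl fun j _ => hterm j]
  by_cases hx : x ∈ S
  · set k : Fin S.card := S.equivFin ⟨x, hx⟩ with hk
    set j₀ : Fin (2 ^ (n - 1)) := ⟨(k : ℕ), lt_of_lt_of_le k.isLt hS⟩ with hj₀
    have hpj₀ : p j₀ = x := by
      have h' : ((j₀ : ℕ) : ℕ) < S.card := k.isLt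
      have : p j₀ = (S.equivFin.symm ⟨(j₀ : ℕ), h'⟩ : _) := by
        rw [hp]; simp [h']
      rw [this]
      have : (⟨(j₀ : ℕ), h'⟩ : Fin S.card) = k := by
        ext; rfl
      rw [this, hk, Equiv.symm_apply_apply]
    rw [if_pos hx]
    rw [Finset.sum_eq_single j₀]
    · simp [k.isLt, hpj₀.symm, show (j₀ : ℕ) < S.card from k.isLt]
    · intro j _ hj
      rw [if_neg]
      rintro ⟨h1, h2⟩
      apply hj
      have : S.equivFin.symm ⟨(j : ℕ), h1⟩ = ⟨x, hx⟩ := by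
        apply Subtype.ext
        have : p j = (S.equivFin.symm ⟨(j : ℕ), h1⟩ : _) := by rw [hp]; simp [h1]
        rw [← this, ← h2]
      have hkj : (⟨(j : ℕ), h1⟩ : Fin S.card) = k := by
        rw [hk, ← this, Equiv.apply_symm_apply]
      ext
      have := congrArg (fun t : Fin S.card => (t : ℕ)) hkj
      simpa [hj₀] using this
    · intro h; exact absurd (Finset.mem_univ j₀) h
  · rw [if_neg hx]
    refine Finset.sum_eq_zero fun j _ => ?_
    rw [if_neg]
    rintro ⟨h1, h2⟩
    apply hx
    have : p j = (S.equivFin.symm ⟨(j : ℕ), h1⟩ : _) := by rw [hp]; simp [h1]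
    rw [h2, this]
    exact (S.equivFin.symm ⟨(j : ℕ), h1⟩).2

/-- A one-hidden-layer ReLU network with `2^(n-1)` hidden neurons (with biases) and a
threshold output unit can express every Boolean function on `{0,1}^n`. -/
theorem stmt_9 {n : ℕ} (f : (Fin n → Bool) → Bool) :
    ∃ (w₁ : Fin (2 ^ (n - 1)) → Fin n → ℝ) (b₁ : Fin (2 ^ (n - 1)) → ℝ)
      (w₂ : Fin (2 ^ (n - 1)) → ℝ) (b₂ : ℝ),
      ∀ x : Fin n → Bool,
        (0 < ∑ j, w₂ j * max 0 (∑ i, w₁ j i * ind x i + b₁ j) + b₂) ↔ f x = true := by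
  classical
  set T : Finset (Fin n → Bool) := Finset.univ.filter fun x => f x = true with hT
  set F : Finset (Fin n → Bool) := Finset.univ.filter fun x => ¬ f x = true with hF
  have hTF : T.card + F.card = 2 ^ n := by
    rw [hT, hF, Finset.card_filter_add_card_filter_not]
    simp [Fintype.card_fun]
  have h2m : 2 ^ n ≤ 2 * 2 ^ (n - 1) := by
    cases n with
    | zero => norm_num
    | succ k => simp [pow_succ]; ring_nf; omega
  by_cases hcase : T.card ≤ 2 ^ (n - 1)
  · obtain ⟨w₁, b₁, w₂, hnet⟩ := network_indicator T hcase
    refine ⟨w₁, b₁, w₂, -(1/2), fun x => ?_⟩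
    rw [hnet x]
    have hxT : x ∈ T ↔ f x = true := by rw [hT]; simp
    by_cases hfx : f x = true
    · rw [if_pos (hxT.mpr hfx)]
      simp [hfx]
      norm_num
    · rw [if_neg (fun hmem => hfx (hxT.mp hmem))]
      simp [hfx]
  · have hFcard : F.card ≤ 2 ^ (n - 1) := by omega
    obtain ⟨w₁, b₁, w₂, hnet⟩ := network_indicator F hFcard
    refine ⟨w₁, b₁, fun j => -(w₂ j), 1/2, fun x => ?_⟩
    have hsum : ∑ j : Fin (2 ^ (n - 1)),
        (fun j => -(w₂ j)) j * max 0 (∑ i, w₁ j i * ind x i + b₁ j)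
        = -(if x ∈ F then (1:ℝ) else 0) := by
      rw [← hnet x, ← Finset.sum_neg_distrib]
      exact Finset.sum_congr rfl fun j _ => by ring
    rw [hsum]
    have hxF : x ∈ F ↔ ¬ f x = true := by rw [hF]; simp
    by_cases hfx : f x = true
    · rw [if_neg (fun hmem => (hxF.mp hmem) hfx)]
      simp [hfx]
    · rw [if_pos (hxF.mpr hfx)]
      simp [hfx]
      norm_num
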